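/- Let W be a nonnegative-integer-valued random variable with E[W] = α ∈ (0,∞), and suppose that for every bounded h : ℕ → ℝ, |E[α·h(W+1) - W·h(W)]| ≤ c · sup_i |h(i+1) - h(i)|. Then the total variation distance between the law of W and the Poisson(α) distribution is at most c · min(1, 1/α). -/

import Mathlib

open MeasureTheory ProbabilityTheory

/-- The Poisson pmf with real parameter `r`. -/
noncomputable def poissonPmf (r : ℝ) (n : ℕ) : ℝ := Real.exp (-r) * r ^ n / n.factorial

namespace SteinAux

variable (α : ℝ)

lemma ppos (hα : 0 < α) (n : ℕ) : 0 < poissonPmf α n := by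
  unfold poissonPmf
  positivity

lemma prec (n : ℕ) : ((n : ℝ) + 1) * poissonPmf α (n + 1) = α * poissonPmf α n := by
  unfold poissonPmf
  rw [Nat.factorial_succ]
  push_cast
  have h : ((n:ℝ) + 1) ≠ 0 := by positivity
  field_simp
  ring

lemma psum (hα : 0 < α) : HasSum (poissonPmf α) 1 := by
  have := ProbabilityTheory.poissonPMFRealSum ⟨α, hα.le⟩
  have he : poissonPmf α = fun n => ProbabilityTheory.poissonPMFReal ⟨α, hα.le⟩ n := by
    funext n; simp [poissonPmf, ProbabilityTheory.poissonPMFReal]; rfl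
  rw [he]; exact this

end SteinAux

namespace SteinAux

noncomputable def F (α : ℝ) (n : ℕ) : ℝ := ∑ k ∈ Finset.range (n+1), poissonPmf α k
noncomputable def T (α : ℝ) (n : ℕ) : ℝ := ∑' k, poissonPmf α (k + (n+1))
noncomputable def q (α : ℝ) (A : Set ℕ) (n : ℕ) : ℝ :=
  ∑ k ∈ Finset.range (n+1), A.indicator (poissonPmf α) k
noncomputable def mu (α : ℝ) (A : Set ℕ) : ℝ := ∑' n, A.indicator (poissonPmf α) n

variable {α : ℝ}

lemma summable_p (hα : 0 < α) : Summable (poissonPmf α) := (psum α hα).summable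

lemma summable_ind (hα : 0 < α) (A : Set ℕ) : Summable (A.indicator (poissonPmf α)) :=
  (summable_p hα).indicator A

lemma ind_nonneg (hα : 0 < α) (A : Set ℕ) (n : ℕ) : 0 ≤ A.indicator (poissonPmf α) n :=
  Set.indicator_nonneg (fun k _ => (ppos α hα k).le) n

lemma ind_le_p (hα : 0 < α) (A : Set ℕ) (n : ℕ) : A.indicator (poissonPmf α) n ≤ poissonPmf α n :=
  Set.indicator_le_self' (fun k _ => (ppos α hα k).le) n

lemma FT (hα : 0 < α) (n : ℕ) : F α n + T α n = 1 := by
  rw [F, T, Summable.sum_add_tsum_nat_add (n+1) (summable_p hα), (psum α hα).tsum_eq]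

lemma T_nonneg (hα : 0 < α) (n : ℕ) : 0 ≤ T α n := tsum_nonneg fun k => (ppos α hα _).le

lemma F_pos (hα : 0 < α) (n : ℕ) : 0 < F α n :=
  Finset.sum_pos (fun k _ => ppos α hα k) ⟨0, by simp⟩

lemma F_le_one (hα : 0 < α) (n : ℕ) : F α n ≤ 1 := by
  have := FT hα n; have := T_nonneg hα (α := α) n; linarith

lemma q_nonneg (hα : 0 < α) (A : Set ℕ) (n : ℕ) : 0 ≤ q α A n :=
  Finset.sum_nonneg fun k _ => ind_nonneg hα A k

lemma q_le_F (hα : 0 < α) (A : Set ℕ) (n : ℕ) : q α A n ≤ F α n :=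
  Finset.sum_le_sum fun k _ => ind_le_p hα A k

lemma q_le_mu (hα : 0 < α) (A : Set ℕ) (n : ℕ) : q α A n ≤ mu α A :=
  Summable.sum_le_tsum _ (fun k _ => ind_nonneg hα A k) (summable_ind hα A)

lemma mu_nonneg (hα : 0 < α) (A : Set ℕ) : 0 ≤ mu α A := tsum_nonneg fun k => ind_nonneg hα A k

lemma mu_le_one (hα : 0 < α) (A : Set ℕ) : mu α A ≤ 1 := by
  have h := Summable.tsum_le_tsum (ind_le_p hα A) (summable_ind hα A) (summable_p hα)
  rw [(psum α hα).tsum_eq] at h; exact h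

lemma mu_sub_q_le_T (hα : 0 < α) (A : Set ℕ) (n : ℕ) : mu α A - q α A n ≤ T α n := by
  have hsplit : q α A n + ∑' k, A.indicator (poissonPmf α) (k + (n+1)) = mu α A := by
    rw [q, mu, Summable.sum_add_tsum_nat_add (n+1) (summable_ind hα A)]
  have h2 : ∑' k, A.indicator (poissonPmf α) (k + (n+1)) ≤ T α n :=
    Summable.tsum_le_tsum (fun k => ind_le_p hα A _)
      ((summable_ind hα A).comp_injective (add_left_injective (n+1)))
      ((summable_p hα).comp_injective (add_left_injective (n+1)))
  linarith

lemma tail (hα : 0 < α) (n : ℕ) : ((n:ℝ) + 2) * T α (n+1) ≤ α * T α n := by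
  have h1 : α * T α n = ∑' (k : ℕ), ((k:ℝ) + n + 2) * poissonPmf α (k + (n+2)) := by
    rw [T, ← tsum_mul_left]
    refine tsum_congr fun k => ?_
    have := prec α (k + (n+1))
    push_cast at this
    rw [← this]
    ring_nf
  have hs : Summable (fun (k : ℕ) => ((k:ℝ) + n + 2) * poissonPmf α (k + (n+2))) := by
    have : (fun (k : ℕ) => ((k:ℝ) + n + 2) * poissonPmf α (k + (n+2)))
        = fun (k : ℕ) => α * poissonPmf α (k + (n+1)) := by
      funext k
      have := prec α (k + (n+1))
      push_cast at this
      rw [← this]; ring_nf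
    rw [this]
    exact ((summable_p hα).comp_injective (add_left_injective (n+1))).mul_left α
  have h2 : ((n:ℝ) + 2) * T α (n+1) = ∑' k, ((n:ℝ) + 2) * poissonPmf α (k + (n+2)) := by
    rw [T, ← tsum_mul_left]
  rw [h1, h2]
  refine Summable.tsum_le_tsum (fun k => ?_) ?_ hs
  · have := (ppos α hα (k + (n+2))).le
    nlinarith [Nat.cast_nonneg (α := ℝ) k]
  · exact ((summable_p hα).comp_injective (add_left_injective (n+2))).mul_left _

lemma front (hα : 0 < α) (n : ℕ) : α * F α n ≤ ((n:ℝ) + 1) * F α (n+1) := by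
  have h1 : α * F α n = ∑ k ∈ Finset.range (n+1), ((k:ℝ) + 1) * poissonPmf α (k+1) := by
    rw [F, Finset.mul_sum]
    exact Finset.sum_congr rfl fun k _ => (prec α k).symm
  have h2 : ∑ k ∈ Finset.range (n+1), ((k:ℝ) + 1) * poissonPmf α (k+1)
      ≤ ((n:ℝ) + 1) * ∑ k ∈ Finset.range (n+1), poissonPmf α (k+1) := by
    rw [Finset.mul_sum]
    refine Finset.sum_le_sum fun k hk => ?_
    have hk' : (k:ℝ) + 1 ≤ (n:ℝ) + 1 := by
      have := Finset.mem_range.mp hk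
      have : (k:ℝ) ≤ n := by exact_mod_cast Nat.lt_succ_iff.mp this
      linarith
    nlinarith [(ppos α hα (k+1)).le]
  have h3 : ∑ k ∈ Finset.range (n+1), poissonPmf α (k+1) ≤ F α (n+1) := by
    rw [F, Finset.sum_range_succ' (fun k => poissonPmf α k) (n+1)]
    have := (ppos α hα 0).le
    linarith
  have hn : (0:ℝ) ≤ (n:ℝ) + 1 := by positivity
  calc α * F α n = _ := h1
    _ ≤ _ := h2
    _ ≤ ((n:ℝ)+1) * F α (n+1) := by nlinarith

end SteinAux

namespace SteinAux

noncomputable def g (α : ℝ) (A : Set ℕ) : ℕ → ℝ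
  | 0 => 0
  | (n+1) => (q α A n - mu α A * F α n) / (α * poissonPmf α n)

variable {α : ℝ}

lemma g_succ (A : Set ℕ) (n : ℕ) :
    g α A (n+1) = (q α A n - mu α A * F α n) / (α * poissonPmf α n) := rfl

lemma stein_id (hα : 0 < α) (A : Set ℕ) (n : ℕ) :
    α * g α A (n+1) - n * g α A n = A.indicator (fun _ => (1:ℝ)) n - mu α A := by
  have hind : A.indicator (poissonPmf α) n = A.indicator (fun _ => (1:ℝ)) n * poissonPmf α n := by
    by_cases h : n ∈ A <;> simp [Set.indicator_of_mem, Set.indicator_of_notMem, h]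
  rcases n with _ | m
  · have hp := ppos α hα 0
    rw [g_succ]
    have hq : q α A 0 = A.indicator (poissonPmf α) 0 := by simp [q]
    have hF : F α 0 = poissonPmf α 0 := by simp [F]
    rw [hq, hF, hind]
    push_cast
    field_simp
    ring
  · have hp := ppos α hα m
    have hp' := ppos α hα (m+1)
    have hrec := prec α m
    have hq : q α A (m+1) = q α A m + A.indicator (poissonPmf α) (m+1) :=
      Finset.sum_range_succ _ _
    have hF : F α (m+1) = F α m + poissonPmf α (m+1) := Finset.sum_range_succ _ _
    have h1 : α * g α A (m+1+1)
        = (q α A (m+1) - mu α A * F α (m+1)) / poissonPmf α (m+1) := by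
      rw [g_succ, ← mul_div_assoc, mul_div_mul_left _ _ hα.ne']
    have h2 : ((m:ℝ)+1) * g α A (m+1)
        = (q α A m - mu α A * F α m) / poissonPmf α (m+1) := by
      rw [g_succ, eq_div_iff hp'.ne']
      field_simp
      linear_combination (q α A m - mu α A * F α m) * hrec
    push_cast
    rw [h1, h2, div_sub_div_same, hq, hF, hind]
    field_simp
    ring

end SteinAux

namespace SteinAux

variable {α : ℝ}

/-- `T n / p n` is decreasing (cleared form). -/
lemma uineq (hα : 0 < α) (n : ℕ) :
    T α (n+1) * poissonPmf α n ≤ T α n * poissonPmf α (n+1) := by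
  have hrec := prec α n
  have htail := tail hα n
  have hp := ppos α hα n
  have hp' := ppos α hα (n+1)
  have hT' := T_nonneg hα (α := α) (n+1)
  -- α * (T' * P) = (n+1) * T' * P' ≤ (n+2) T' P' ≤ α T P'
  nlinarith [mul_nonneg hT' hp'.le, mul_le_mul_of_nonneg_right htail hp'.le]

/-- `F n / p n` is increasing (cleared form). -/
lemma vineq (hα : 0 < α) (n : ℕ) :
    F α n * poissonPmf α (n+1) ≤ F α (n+1) * poissonPmf α n := by
  have hrec := prec α n
  have hfront := front hα n
  have hp := ppos α hα n
  have hp' := ppos α hα (n+1)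
  have hF' := (F_pos hα (α := α) (n+1)).le
  nlinarith [mul_le_mul_of_nonneg_right hfront hp'.le]

/-- Key: `F n * p (n+1) + T (n+1) * p n ≤ α * p n`. -/
lemma key (hα : 0 < α) (n : ℕ) :
    F α n * poissonPmf α (n+1) + T α (n+1) * poissonPmf α n ≤ α * poissonPmf α n := by
  have hrec := prec α n
  have htail := tail hα n
  have hp := ppos α hα n
  have hp' := ppos α hα (n+1)
  have hT' := T_nonneg hα (α := α) (n+1)
  have hT := T_nonneg hα (α := α) n
  have hFT := FT hα (α := α) n
  -- (n+1)(F n P' + T' P) = F n α P + (n+1) T' P ≤ F n α P + (n+2) T' P ≤ αP(F n + T n) = αP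
  have h1 : ((n:ℝ)+1) * (F α n * poissonPmf α (n+1) + T α (n+1) * poissonPmf α n)
      ≤ ((n:ℝ)+1) * (α * poissonPmf α n) := by
    have e2 : ((n:ℝ)+1) * (F α n * poissonPmf α (n+1)) = F α n * (α * poissonPmf α n) := by
      rw [show ((n:ℝ)+1) * (F α n * poissonPmf α (n+1))
          = F α n * (((n:ℝ)+1) * poissonPmf α (n+1)) by ring, hrec]
    have e3 : (F α n + T α n) * (α * poissonPmf α n) = α * poissonPmf α n := by
      rw [hFT, one_mul]
    have nn : (0:ℝ) ≤ (n:ℝ) * (α * poissonPmf α n) :=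
      mul_nonneg (Nat.cast_nonneg n) (mul_pos hα hp).le
    have ht := mul_le_mul_of_nonneg_right htail hp.le
    have hT'P := mul_nonneg hT' hp.le
    nlinarith [e2, e3, nn, ht, hT'P]
  have hn : (0:ℝ) < (n:ℝ)+1 := by positivity
  exact le_of_mul_le_mul_left h1 hn

/-- Upper bound on the increments of `g`. -/
lemma delta_le (hα : 0 < α) (A : Set ℕ) (n : ℕ) :
    g α A (n+1) - g α A n ≤ min 1 (1/α) := by
  have hmu0 := mu_nonneg hα A
  have hmu1 := mu_le_one hα A
  rcases n with _ | m
  · -- g 1 - 0 = (i₀ - μ)/α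
    have hp := ppos α hα 0
    have h0 : g α A 1 - g α A 0 = (A.indicator (fun _ => (1:ℝ)) 0 - mu α A) / α := by
      have hq : q α A 0 = A.indicator (poissonPmf α) 0 := by simp [q]
      have hF : F α 0 = poissonPmf α 0 := by simp [F]
      have hind : A.indicator (poissonPmf α) 0
          = A.indicator (fun _ => (1:ℝ)) 0 * poissonPmf α 0 := by
        by_cases h : (0:ℕ) ∈ A <;> simp [Set.indicator_of_mem, Set.indicator_of_notMem, h]
      show g α A 1 - 0 = _
      rw [g_succ, hq, hF, hind, sub_zero]
      field_simp
    rw [h0]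
    refine le_min ?_ ?_
    · rw [div_le_one hα]
      by_cases h : (0:ℕ) ∈ A
      · have hmu : poissonPmf α 0 ≤ mu α A := by
          have := Summable.le_tsum (summable_ind hα A) 0 (fun j _ => ind_nonneg hα A j)
          rwa [Set.indicator_of_mem h] at this
        have hexp : 1 - α ≤ poissonPmf α 0 := by
          have := Real.add_one_le_exp (-α)
          simp [poissonPmf]
          linarith
        simp only [Set.indicator_of_mem h]
        linarith
      · simp only [Set.indicator_of_notMem h]
        linarith
    · rw [div_le_div_iff₀ hα hα, one_mul]
      have : A.indicator (fun _ => (1:ℝ)) 0 ≤ 1 := by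
        by_cases h : (0:ℕ) ∈ A <;>
          simp [Set.indicator_of_mem, Set.indicator_of_notMem, h]
      nlinarith
  · -- main case
    set P := poissonPmf α m with hP
    set P' := poissonPmf α (m+1) with hP'
    have hp : 0 < P := ppos α hα m
    have hp' : 0 < P' := ppos α hα (m+1)
    have hq : q α A (m+1) = q α A m + A.indicator (poissonPmf α) (m+1) :=
      Finset.sum_range_succ _ _
    have hF : F α (m+1) = F α m + P' := Finset.sum_range_succ _ _
    have hdiff : g α A (m+1+1) - g α A (m+1)
        = ((q α A (m+1) - mu α A * F α (m+1)) * P - (q α A m - mu α A * F α m) * P')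
          / (α * P * P') := by
      rw [g_succ, g_succ, ← hP, ← hP']
      field_simp
    rw [hdiff, div_le_iff₀ (by positivity)]
    have hminmul : min 1 (1/α) * (α * P * P') = min α 1 * (P * P') := by
      rcases le_total α 1 with h | h
      · rw [min_eq_left ((le_div_iff₀ hα).mpr (by linarith)), min_eq_left h]
        ring
      · rw [min_eq_right ((div_le_one hα).mpr h), min_eq_right h]
        field_simp
    rw [hminmul]
    -- abbreviations
    set Q := q α A m with hQ
    set μ := mu α A with hμ
    set Fm := F α m with hFm
    have hQ0 : 0 ≤ Q := q_nonneg hα A m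
    have hQmu : Q ≤ μ := q_le_mu hα A m
    have hu := uineq hα m
    have hv := vineq hα m
    have hk := key hα m
    have hFT := FT hα (α := α) m
    have hFT' := FT hα (α := α) (m+1)
    rw [← hP, ← hP'] at hu hv hk
    rw [← hFm] at hv hk hFT
    have hindcase : A.indicator (poissonPmf α) (m+1) = 0 ∨
        (A.indicator (poissonPmf α) (m+1) = P' ∧ Q + P' ≤ μ) := by
      by_cases h : (m+1) ∈ A
      · refine Or.inr ⟨Set.indicator_of_mem h _, ?_⟩
        have := q_le_mu hα A (m+1)
        rw [hq, Set.indicator_of_mem h] at this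
        exact this
      · exact Or.inl (Set.indicator_of_notMem h _)
    have hminsplit : min α 1 * (P * P') = min (α * (P * P')) (P * P') := by
      rw [min_mul_of_nonneg _ _ (by positivity : (0:ℝ) ≤ P * P'), one_mul]
    rcases hindcase with h | ⟨h, hmuQ⟩
    · -- i = 0 : N ≤ 0 ≤ min
      have hN : (q α A (m+1) - μ * F α (m+1)) * P - (Q - μ * Fm) * P' ≤ 0 := by
        rw [hq, hF, h]
        have e1 : (Q + 0 - μ * (Fm + P')) * P - (Q - μ * Fm) * P'
            = Q * ((T α (m+1)) * P - (T α m) * P')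
              + (μ - Q) * (Fm * P' - (F α (m+1)) * P) := by
          have eT : T α (m+1) = 1 - F α (m+1) := by linarith
          have eT2 : T α m = 1 - Fm := by linarith
          rw [eT, eT2, hF]
          ring
        rw [e1]
        have t1 : Q * ((T α (m+1)) * P - (T α m) * P') ≤ 0 :=
          mul_nonpos_of_nonneg_of_nonpos hQ0 (by linarith)
        have t2 : (μ - Q) * (Fm * P' - (F α (m+1)) * P) ≤ 0 :=
          mul_nonpos_of_nonneg_of_nonpos (by linarith) (by linarith)
        linarith
      have : (0:ℝ) ≤ min α 1 * (P * P') := by positivity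
      linarith
    · -- i = 1
      have e1 : (q α A (m+1) - μ * F α (m+1)) * P - (Q - μ * Fm) * P'
          = Q * ((T α (m+1)) * P - (T α m) * P')
            + (μ - Q) * (Fm * P' - (F α (m+1)) * P) + P * P' := by
        have eT : T α (m+1) = 1 - F α (m+1) := by linarith
        have eT2 : T α m = 1 - Fm := by linarith
        rw [hq, hF, h, eT, eT2, hF]
        ring
      have t1 : Q * ((T α (m+1)) * P - (T α m) * P') ≤ 0 :=
        mul_nonpos_of_nonneg_of_nonpos hQ0 (by linarith)
      have t2 : (μ - Q) * (Fm * P' - (F α (m+1)) * P)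
          ≤ P' * (Fm * P' - (F α (m+1)) * P) := by
        apply mul_le_mul_of_nonpos_right ?_ (by linarith)
        linarith
      rw [hminsplit]
      refine le_min ?_ ?_
      · -- ≤ α P P'
        have t3 : P' * (Fm * P' - (F α (m+1)) * P) + P * P' ≤ α * (P * P') := by
          have eT : F α (m+1) = 1 - T α (m+1) := by linarith
          rw [eT]
          nlinarith [mul_le_mul_of_nonneg_right hk hp'.le]
        rw [e1]; linarith
      · -- ≤ P P'
        have t2' : (μ - Q) * (Fm * P' - F α (m+1) * P) ≤ 0 :=
          mul_nonpos_of_nonneg_of_nonpos (by linarith) (by linarith)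
        rw [e1]; linarith

end SteinAux

namespace SteinAux

variable {α : ℝ}

lemma mu_compl (hα : 0 < α) (A : Set ℕ) : mu α Aᶜ = 1 - mu α A := by
  have h : Aᶜ.indicator (poissonPmf α) = poissonPmf α - A.indicator (poissonPmf α) :=
    Set.indicator_compl A (poissonPmf α)
  rw [mu, h]
  rw [show (∑' n, (poissonPmf α - A.indicator (poissonPmf α)) n)
      = ∑' n, (poissonPmf α n - A.indicator (poissonPmf α) n) from rfl]
  rw [Summable.tsum_sub (summable_p hα) (summable_ind hα A), (psum α hα).tsum_eq, mu]

lemma q_compl (hα : 0 < α) (A : Set ℕ) (n : ℕ) : q α Aᶜ n = F α n - q α A n := by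
  have h : Aᶜ.indicator (poissonPmf α) = poissonPmf α - A.indicator (poissonPmf α) :=
    Set.indicator_compl A (poissonPmf α)
  rw [q, h, F, q, ← Finset.sum_sub_distrib]
  rfl

lemma g_compl (hα : 0 < α) (A : Set ℕ) (n : ℕ) : g α Aᶜ n = - g α A n := by
  rcases n with _ | m
  · show (0:ℝ) = -0; simp
  · rw [g_succ, g_succ, q_compl hα, mu_compl hα, ← neg_div]
    congr 1
    ring

lemma delta_abs (hα : 0 < α) (A : Set ℕ) (n : ℕ) :
    |g α A (n+1) - g α A n| ≤ min 1 (1/α) := by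
  rw [abs_le]
  constructor
  · have h := delta_le hα Aᶜ n
    rw [g_compl hα, g_compl hα] at h
    linarith
  · exact delta_le hα A n

lemma num_bound (hα : 0 < α) (A : Set ℕ) (n : ℕ) :
    |q α A n - mu α A * F α n| ≤ T α n := by
  have hq0 := q_nonneg hα A n
  have hqF := q_le_F hα A n
  have hqmu := q_le_mu hα A n
  have hmu1 := mu_le_one hα A
  have hmu0 := mu_nonneg hα A
  have hF1 := F_le_one hα (α := α) n
  have hF0 := (F_pos hα (α := α) n).le
  have hT := T_nonneg hα (α := α) n
  have hFT := FT hα (α := α) n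
  have hmq := mu_sub_q_le_T hα A n
  rw [abs_le]
  constructor
  · nlinarith
  · nlinarith

lemma u_mono (hα : 0 < α) (n : ℕ) :
    T α n / poissonPmf α n ≤ T α 0 / poissonPmf α 0 := by
  induction n with
  | zero => exact le_refl _
  | succ m ih =>
      refine le_trans ?_ ih
      rw [div_le_div_iff₀ (ppos α hα (m+1)) (ppos α hα m)]
      exact uineq hα m

lemma g_bound (hα : 0 < α) (A : Set ℕ) (n : ℕ) :
    |g α A n| ≤ T α 0 / (α * poissonPmf α 0) := by
  have hC : 0 ≤ T α 0 / (α * poissonPmf α 0) := by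
    have := T_nonneg hα (α := α) 0
    have := ppos α hα 0
    positivity
  rcases n with _ | m
  · simpa [g] using hC
  · rw [g_succ, abs_div, abs_of_pos (mul_pos hα (ppos α hα m))]
    calc |q α A m - mu α A * F α m| / (α * poissonPmf α m)
        ≤ T α m / (α * poissonPmf α m) :=
          (div_le_div_iff_of_pos_right (mul_pos hα (ppos α hα m))).mpr
            (num_bound hα A m)
      _ = (T α m / poissonPmf α m) / α := by
          rw [div_div]
          ring_nf
      _ ≤ (T α 0 / poissonPmf α 0) / α :=
          (div_le_div_iff_of_pos_right hα).mpr (u_mono hα m)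
      _ = T α 0 / (α * poissonPmf α 0) := by
          rw [div_div]
          ring_nf

end SteinAux

theorem stein_to_tv {Ω : Type*} [MeasureSpace Ω] [IsProbabilityMeasure (ℙ : Measure Ω)]
    (W : Ω → ℕ) (hW : Measurable W) (α : ℝ) (hα : 0 < α)
    (hmean : ∫ ω, (W ω : ℝ) = α) (c : ℝ) (hc : 0 ≤ c)
    (hstein : ∀ (h : ℕ → ℝ) (C M : ℝ), (∀ i, |h i| ≤ C) → (∀ i, |h (i + 1) - h i| ≤ M) →
      |∫ ω, (α * h (W ω + 1) - (W ω : ℝ) * h (W ω))| ≤ c * M) :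
    ∀ A : Set ℕ, |(ℙ {ω | W ω ∈ A}).toReal - ∑' n : ℕ, Set.indicator A (poissonPmf α) n|
      ≤ c * min 1 (1 / α) := by
  intro A
  have hA : MeasurableSet A := by trivial
  have hpre : MeasurableSet (W ⁻¹' A) := hW hA
  have hfun : (fun ω => α * SteinAux.g α A (W ω + 1) - (W ω : ℝ) * SteinAux.g α A (W ω))
      = fun ω => (W ⁻¹' A).indicator (fun _ => (1:ℝ)) ω - SteinAux.mu α A := by
    funext ω
    rw [SteinAux.stein_id hα A (W ω)]
    congr 1
  have hint : Integrable ((W ⁻¹' A).indicator (fun _ => (1:ℝ))) ℙ :=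
    (integrable_const (1:ℝ)).indicator hpre
  have hkey : (∫ ω, (α * SteinAux.g α A (W ω + 1) - (W ω : ℝ) * SteinAux.g α A (W ω)))
      = (ℙ {ω | W ω ∈ A}).toReal - SteinAux.mu α A := by
    rw [hfun, integral_sub hint (integrable_const _), integral_indicator_const (1:ℝ) hpre,
      integral_const]
    simp [measure_univ]
    rfl
  have hmu : (∑' n : ℕ, Set.indicator A (poissonPmf α) n) = SteinAux.mu α A := rfl
  rw [hmu, ← hkey]
  exact hstein (SteinAux.g α A) (SteinAux.T α 0 / (α * poissonPmf α 0)) (min 1 (1/α))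
    (SteinAux.g_bound hα A) (SteinAux.delta_abs hα A)
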